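/- If a cascaded sensor selection instance satisfies strong dominance, then for every k ∈ {1,…,K}, P(Y^1 ≠ Y^k) − C_k = γ_1 − (γ_k + C_k). Consequently the suboptimality gaps of the USS instance coincide with those of the associated bandit rewards: for every k, (γ_k + C_k) − min_{i∈[K]}(γ_i + C_i) = max_{i∈[K]}(P(Y^1 ≠ Y^i) − C_i) − (P(Y^1 ≠ Y^k) − C_k), and an action maximizes P(Y^1 ≠ Y^k) − C_k if and only if it minimizes γ_k + C_k. -/

import Mathlib

open MeasureTheory

/-- Error probability `γ_k = P(Y^k ≠ Y)` of sensor `k`. -/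
noncomputable def gam {Ω : Type} [MeasurableSpace Ω] (μ : Measure Ω) {K : ℕ}
    (Y : Ω → Bool) (S : Fin K → Ω → Bool) (k : Fin K) : ℝ :=
  (μ {ω | S k ω ≠ Y ω}).toReal

/-- Disagreement probability `P(Y^i ≠ Y^j)` between sensors `i` and `j`. -/
noncomputable def dis {Ω : Type} [MeasurableSpace Ω] (μ : Measure Ω) {K : ℕ}
    (S : Fin K → Ω → Bool) (i j : Fin K) : ℝ :=
  (μ {ω | S i ω ≠ S j ω}).toReal

/-- Cumulative cost `C_k = c_1 + ⋯ + c_k`. -/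
noncomputable def cumCost {K : ℕ} (c : Fin K → ℝ) (k : Fin K) : ℝ :=
  ∑ i ∈ Finset.univ.filter (fun i : Fin K => i ≤ k), c i

/-- Under strong dominance, for every `k`,
`P(Y^1 ≠ Y^k) − C_k = γ_1 − (γ_k + C_k)`; consequently the suboptimality gaps of the USS
instance coincide with those of the associated bandit rewards
`r_k = P(Y^1 ≠ Y^k) − C_k`, and an action maximizes `r_k` iff it minimizes `γ_k + C_k`.
(Sensor `1` is the 0-based index `⟨0, hK⟩`.) -/
theorem strong_dominance_bandit_reduction
    {Ω : Type} [MeasurableSpace Ω] (μ : Measure Ω) [IsProbabilityMeasure μ]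
    {K : ℕ} (hK : 0 < K) (Y : Ω → Bool) (S : Fin K → Ω → Bool)
    (hY : Measurable Y) (hS : ∀ k, Measurable (S k))
    (c : Fin K → ℝ) (hc : ∀ k, 0 ≤ c k)
    (hmono : ∀ i j : Fin K, i ≤ j → gam μ Y S j ≤ gam μ Y S i)
    (hSD : ∀ i j : Fin K, i ≤ j → ∀ᵐ ω ∂μ, S i ω = Y ω → S j ω = Y ω) :
    (∀ k : Fin K, dis μ S ⟨0, hK⟩ k - cumCost c k
        = gam μ Y S ⟨0, hK⟩ - (gam μ Y S k + cumCost c k)) ∧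
    (∀ k : Fin K,
      (gam μ Y S k + cumCost c k)
          - Finset.univ.inf' ⟨⟨0, hK⟩, Finset.mem_univ _⟩
              (fun i => gam μ Y S i + cumCost c i)
        = Finset.univ.sup' ⟨⟨0, hK⟩, Finset.mem_univ _⟩
              (fun i => dis μ S ⟨0, hK⟩ i - cumCost c i)
          - (dis μ S ⟨0, hK⟩ k - cumCost c k)) ∧
    (∀ k : Fin K,
      (∀ i, dis μ S ⟨0, hK⟩ i - cumCost c i ≤ dis μ S ⟨0, hK⟩ k - cumCost c k) ↔
      (∀ i, gam μ Y S k + cumCost c k ≤ gam μ Y S i + cumCost c i)) := by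
  have hle : ∀ k : Fin K, (⟨0, hK⟩ : Fin K) ≤ k := fun k => by
    simp [Fin.le_def]
  have key : ∀ k : Fin K, gam μ Y S ⟨0, hK⟩ = dis μ S ⟨0, hK⟩ k + gam μ Y S k := by
    intro k
    have hae := hSD ⟨0, hK⟩ k (hle k)
    set A := {ω | S ⟨0, hK⟩ ω ≠ S k ω} with hA
    set B := {ω | S k ω ≠ Y ω} with hB
    have hBmeas : NullMeasurableSet B μ :=
      ((measurableSet_eq_fun (hS k) hY).compl).nullMeasurableSet
    have hunion : (A ∪ B : Set Ω) =ᵐ[μ] {ω | S ⟨0, hK⟩ ω ≠ Y ω} := by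
      refine Filter.eventuallyEq_set.mpr (hae.mono fun ω h => ?_)
      simp only [Set.mem_union, hA, hB, Set.mem_setOf_eq]
      constructor
      · rintro (h1 | h1) h0
        · exact h1 (h0.trans (h h0).symm)
        · exact h1 (h h0)
      · intro h0
        by_cases hk : S k ω = Y ω
        · exact Or.inl (fun he => h0 (he.trans hk))
        · exact Or.inr hk
    have hdisj : MeasureTheory.AEDisjoint μ A B := by
      have hnm : ∀ᵐ ω ∂μ, ω ∉ A ∩ B := by
        refine hae.mono fun ω h hω => ?_
        obtain ⟨h1, h2⟩ := hω
        simp only [hA, hB, Set.mem_setOf_eq] at h1 h2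
        have h0 : S ⟨0, hK⟩ ω = Y ω := by
          cases hx : S ⟨0, hK⟩ ω <;> cases hy : Y ω <;> cases hk : S k ω <;> simp_all
        exact h2 (h h0)
      exact MeasureTheory.measure_eq_zero_iff_ae_notMem.mpr hnm
    have hsum : μ {ω | S ⟨0, hK⟩ ω ≠ Y ω} = μ A + μ B := by
      rw [← measure_congr hunion, measure_union₀ hBmeas hdisj]
    simp only [gam, dis, hsum, ENNReal.toReal_add (measure_ne_top μ A) (measure_ne_top μ B)]
    rfl
  have hr : ∀ k : Fin K, dis μ S ⟨0, hK⟩ k - cumCost c k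
      = gam μ Y S ⟨0, hK⟩ - (gam μ Y S k + cumCost c k) := by
    intro k; rw [key k]; ring
  refine ⟨hr, ?_, ?_⟩
  · set H : Finset.Nonempty (Finset.univ : Finset (Fin K)) :=
      ⟨⟨0, hK⟩, Finset.mem_univ _⟩
    have hsup : Finset.univ.sup' H (fun i => dis μ S ⟨0, hK⟩ i - cumCost c i)
        = gam μ Y S ⟨0, hK⟩
          - Finset.univ.inf' H (fun i => gam μ Y S i + cumCost c i) := by
      rw [Finset.sup'_congr H rfl (fun i _ => hr i)]
      apply le_antisymm
      · exact Finset.sup'_le _ _ fun i hi =>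
          sub_le_sub_left (Finset.inf'_le (fun i => gam μ Y S i + cumCost c i) hi) _
      · obtain ⟨i, hi, hgi⟩ := Finset.exists_mem_eq_inf' H
          (fun i => gam μ Y S i + cumCost c i)
        rw [hgi]
        exact Finset.le_sup' (fun i => gam μ Y S ⟨0, hK⟩ - (gam μ Y S i + cumCost c i)) hi
    intro k
    rw [hsup, hr k]
    ring
  · intro k
    constructor
    · intro h i
      have hi := h i
      rw [hr i, hr k] at hi
      linarith
    · intro h i
      rw [hr i, hr k]
      have := h i
      linarith
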